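/- (Le Cam two-point lower bound.) For every r ≥ 1, every n ≥ 1, every ε ∈ (0,1), every measurable estimator θ̂_r : ℕ^n → ℝ, and every measurable function h : ℝ → ℝ, one has sup over all probability mass functions P on ℕ of P_P( ℓ(θ̂_r(X_n), θ_r(P;X_n)) ≥ ε ) ≥ 1/2. -/

import Mathlib

open MeasureTheory ProbabilityTheory Real Filter ENNReal

noncomputable section

/-- The law of an i.i.d. sample of size `n` from the discrete distribution `P` on `ℕ`. -/
def sampleMeasure (P : PMF ℕ) (n : ℕ) : Measure (Fin n → ℕ) :=
  Measure.pi fun _ => P.toMeasure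

/-- The probability mass of symbol `j` under `P`, as a real number. -/
def pReal (P : PMF ℕ) (j : ℕ) : ℝ := (P j).toReal

/-- Empirical frequency of the symbol `j` in the sample `ω`. -/
def freq {n : ℕ} (ω : Fin n → ℕ) (j : ℕ) : ℕ :=
  (Finset.univ.filter fun i => ω i = j).card

/-- The `r`-order missing mass `θ_r(P; X_n)`. -/
def missingMass (p : ℕ → ℝ) (r : ℕ) {n : ℕ} (ω : Fin n → ℕ) : ℝ :=
  ∑' j, p j ^ r * (if freq ω j = 0 then 1 else 0)

/-- The multiplicative (relative) loss: `ℓ(t, θ) = |t/θ - 1|` if `θ > 0`, and `h t` otherwise. -/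
def mloss (h : ℝ → ℝ) (t θ : ℝ) : ℝ := if 0 < θ then |t / θ - 1| else h t

/-- Le Cam two-point lower bound: the worst-case probability of a relative error at least
`ε` is at least `1/2`, for every estimator of the `r`-order missing mass. -/
theorem missingMass_leCam_lower_bound (r n : ℕ) (hr : 1 ≤ r) (hn : 1 ≤ n)
    (ε : ℝ) (hε : ε ∈ Set.Ioo (0 : ℝ) 1)
    (est : (Fin n → ℕ) → ℝ) (hest : Measurable est)
    (h : ℝ → ℝ) (hh : Measurable h) :
    (1 / 2 : ℝ≥0∞) ≤
      ⨆ P : PMF ℕ,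
        sampleMeasure P n
          {ω | mloss h (est ω) (missingMass (pReal P) r ω) ≥ ε} := by
  obtain ⟨hε0, hε1⟩ := hε
  set ω₀ : Fin n → ℕ := fun _ => 0 with hω₀
  set t : ℝ := est ω₀ with ht
  have hn0 : (0:ℝ) < n := by exact_mod_cast hn
  set δ : ℝ := if 0 < t then min (1/(2*n)) (t/(1+ε)) else 1/(2*n) with hδdef
  have h2n : (0:ℝ) < 1/(2*n) := by positivity
  have hδpos : 0 < δ := by
    rw [hδdef]; split_ifs with h'
    · exact lt_min h2n (by positivity)
    · exact h2n
  have hδle : δ ≤ 1/(2*n) := by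
    rw [hδdef]; split_ifs
    · exact min_le_left _ _
    · exact le_refl _
  have hδhalf : δ ≤ 1/2 := hδle.trans (by
    rw [div_le_div_iff₀ (by positivity) (by norm_num)]
    have h1n : (1:ℝ) ≤ n := by exact_mod_cast hn
    nlinarith)
  have hδlt1 : δ < 1 := lt_of_le_of_lt hδhalf (by norm_num)
  set δe : ℝ≥0∞ := ENNReal.ofReal δ with hδe
  have hδe1 : δe ≤ 1 := by rw [hδe]; exact ENNReal.ofReal_le_one.2 hδlt1.le
  have hδetop : δe ≠ ⊤ := ne_top_of_le_ne_top ENNReal.one_ne_top hδe1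
  have hδn1 : δe.toNNReal ≤ 1 := by
    have := ENNReal.toNNReal_mono ENNReal.one_ne_top hδe1
    rwa [ENNReal.toNNReal_one] at this
  set P : PMF ℕ := (PMF.bernoulli δe.toNNReal hδn1).map (fun b => if b then 1 else 0) with hP
  have hP1 : P 1 = δe := by
    rw [hP, PMF.map_apply, tsum_bool]
    simp
    rw [PMF.bernoulli_apply]
    simp [ENNReal.coe_sub, ENNReal.coe_toNNReal hδetop]
  have hP0 : P 0 = 1 - δe := by
    rw [hP, PMF.map_apply, tsum_bool]
    simp
    rw [PMF.bernoulli_apply]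
    simp [ENNReal.coe_sub, ENNReal.coe_toNNReal hδetop]
  have hPj : ∀ j : ℕ, j ≠ 0 → j ≠ 1 → P j = 0 := by
    intro j h0 h1
    rw [hP, PMF.map_apply, tsum_bool]
    simp [h0, h1]
  have hfreq0 : freq ω₀ 0 = n := by
    simp [freq, hω₀]
  have hfreqj : ∀ j : ℕ, j ≠ 0 → freq ω₀ j = 0 := by
    intro j hj
    simp [freq, hω₀, (Ne.symm hj)]
  have hθ : missingMass (pReal P) r ω₀ = δ ^ r := by
    rw [missingMass, tsum_eq_single 1 ?_]
    · rw [hfreqj 1 one_ne_zero]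
      simp [pReal, hP1, hδe, ENNReal.toReal_ofReal hδpos.le]
    · intro j hj
      by_cases hj0 : j = 0
      · subst hj0
        rw [hfreq0]
        simp [Nat.one_le_iff_ne_zero.mp hn]
      · rw [pReal, hPj j hj0 hj]
        simp [zero_pow (Nat.one_le_iff_ne_zero.mp hr)]
  have hδr_pos : 0 < δ ^ r := pow_pos hδpos r
  have hmem : ω₀ ∈ {ω | mloss h (est ω) (missingMass (pReal P) r ω) ≥ ε} := by
    show ε ≤ mloss h (est ω₀) (missingMass (pReal P) r ω₀)
    rw [hθ, mloss, if_pos hδr_pos, ← ht]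
    by_cases htpos : 0 < t
    · have hδle' : δ ≤ t / (1 + ε) := by
        rw [hδdef, if_pos htpos]; exact min_le_right _ _
      have hδr_le : δ ^ r ≤ t / (1 + ε) :=
        le_trans (pow_le_of_le_one hδpos.le hδlt1.le (Nat.one_le_iff_ne_zero.mp hr)) hδle'
      have h1ε : (0:ℝ) < 1 + ε := by linarith
      have : (1 + ε) ≤ t / δ ^ r := by
        rw [le_div_iff₀ hδr_pos]
        calc (1 + ε) * δ ^ r ≤ (1 + ε) * (t / (1 + ε)) := by
              exact mul_le_mul_of_nonneg_left hδr_le h1ε.le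
          _ = t := by field_simp
      calc ε ≤ t / δ ^ r - 1 := by linarith
        _ ≤ |t / δ ^ r - 1| := le_abs_self _
    · push_neg at htpos
      have : t / δ ^ r ≤ 0 := div_nonpos_of_nonpos_of_nonneg htpos hδr_pos.le
      calc ε ≤ 1 - t / δ ^ r := by linarith
        _ = |t / δ ^ r - 1| := by rw [abs_sub_comm, abs_of_nonneg (by linarith)]
  have hmeas : sampleMeasure P n {ω₀} = (1 - δe) ^ n := by
    rw [sampleMeasure, ← Set.univ_pi_singleton ω₀, Measure.pi_pi]
    simp only [hω₀]
    rw [Finset.prod_congr rfl fun i _ =>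
      PMF.toMeasure_apply_singleton P 0 (measurableSet_singleton 0)]
    rw [hP0, Finset.prod_const, Finset.card_univ, Fintype.card_fin]
  have hhalf : (1 / 2 : ℝ≥0∞) ≤ (1 - δe) ^ n := by
    have hsub : 1 - δe = ENNReal.ofReal (1 - δ) := by
      rw [hδe, ENNReal.ofReal_sub 1 hδpos.le, ENNReal.ofReal_one]
    rw [hsub, ← ENNReal.ofReal_pow (by linarith)]
    have hre : (1/2 : ℝ) ≤ (1 - δ) ^ n := by
      rw [show (1:ℝ) - δ = 1 + -δ from by ring]
      have := one_add_mul_le_pow (a := -δ) (by linarith) n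
      have hnd : (n:ℝ) * δ ≤ 1/2 := by
        calc (n:ℝ) * δ ≤ n * (1/(2*n)) := by
              exact mul_le_mul_of_nonneg_left hδle hn0.le
          _ = 1/2 := by field_simp
      nlinarith
    calc (1/2 : ℝ≥0∞) = ENNReal.ofReal (1/2) := by
          rw [ENNReal.ofReal_div_of_pos (by norm_num)]; norm_num
      _ ≤ _ := ENNReal.ofReal_le_ofReal hre
  refine le_trans ?_ (le_iSup (fun P : PMF ℕ =>
    sampleMeasure P n {ω | mloss h (est ω) (missingMass (pReal P) r ω) ≥ ε}) P)
  calc (1/2 : ℝ≥0∞) ≤ sampleMeasure P n {ω₀} := hmeas ▸ hhalf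
    _ ≤ _ := measure_mono (Set.singleton_subset_iff.2 hmem)

end
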